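/- arXiv:1702.04678 — 3 statements merged into one kernel-verified Lean document; each statement's English description precedes it below -/
import Mathlib

section
/- Let U be a finite-dimensional complex normed vector space, d ≥ 1, and Γ : ℝ^d → End(U) an ℝ-linear map whose values pairwise commute. Let λ : ℝ^d → ℂ be ℝ-linear and let E ∈ End(U) be an idempotent commuting with Γ(X) for all X ∈ ℝ^d and such that E ∘ (Γ(X) − λ(X)·Id) is nilpotent for all X ∈ ℝ^d. Let X₁, X₂, a ∈ ℝ^d, let Φ : ℝ^d → U be differentiable, and for i = 1, 2 let Ψ_i : ℝ^d → U be continuous with D_{X_i}Φ(b) = Γ(X_i) Φ(b) + Ψ_i(b) for all b ∈ ℝ^d. Assume there exist C, ε > 0 and N ∈ ℕ such that ‖Ψ_i(a + t₁X₁ + t₂X₂)‖ ≤ C (1 + t₁ + t₂)^N e^{Re λ(t₁X₁ + t₂X₂)} e^{−ε(t₁+t₂)} for i = 1, 2 and all t₁, t₂ ≥ 0. Then the limits L_i = lim_{t→+∞} e^{−tΓ(X_i)} E Φ(a + tX_i) exist for i = 1, 2, and L₁ = L₂. -/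
set_option linter.unusedSectionVars false
set_option maxHeartbeats 2000000

open Filter

namespace ConstTermAux
open NormedSpace Nat

section Aux
variable {𝔸 : Type*} [NormedRing 𝔸] [NormedAlgebra ℂ 𝔸] [CompleteSpace 𝔸]


variable {𝔸 : Type*} [NormedRing 𝔸] [NormedAlgebra ℂ 𝔸] [CompleteSpace 𝔸]

lemma aux_pow_mul_idem (B M : 𝔸) (hM : M * M = M) (h : Commute B M) (k : ℕ) :
    B ^ k * M = (B * M) ^ k * M := by
  induction k with
  | zero => simp
  | succ k ih =>
    have hc : Commute B ((B * M) ^ k) := ((Commute.refl B).mul_right h).pow_right k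
    calc B ^ (k+1) * M = B ^ k * (B * M) := by rw [pow_succ, mul_assoc]
      _ = B ^ k * (M * B) := by rw [h.eq]
      _ = (B ^ k * M) * B := by rw [mul_assoc]
      _ = ((B * M) ^ k * M) * B := by rw [ih]
      _ = (B * M) ^ k * (M * B) := by rw [mul_assoc]
      _ = (B * M) ^ k * (B * M) := by rw [h.eq]
      _ = (B * M) ^ (k+1) * M := by simp [pow_succ, mul_assoc, hM]

lemma aux_idem_pow_mul (M : 𝔸) (hM : M * M = M) (k : ℕ) : M ^ k * M = M := by
  induction k with
  | zero => simp
  | succ k ih => rw [pow_succ, mul_assoc, hM, ih]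

lemma aux_exp_mul_idem (B M : 𝔸) (hM : M * M = M) (h : Commute B M) :
    exp B * M = exp (B * M) * M := by
  calc exp B * M = (∑' k : ℕ, (k !⁻¹ : ℂ) • B ^ k) * M := by rw [exp_eq_tsum ℂ]
    _ = ∑' k : ℕ, ((k !⁻¹ : ℂ) • B ^ k) * M := ((expSeries_summable' (𝕂 := ℂ) B).tsum_mul_right M).symm
    _ = ∑' k : ℕ, ((k !⁻¹ : ℂ) • (B * M) ^ k) * M := by
        refine tsum_congr fun k => ?_
        rw [smul_mul_assoc, smul_mul_assoc, aux_pow_mul_idem B M hM h k]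
    _ = (∑' k : ℕ, (k !⁻¹ : ℂ) • (B * M) ^ k) * M := (expSeries_summable' (𝕂 := ℂ) (B * M)).tsum_mul_right M
    _ = exp (B * M) * M := by rw [exp_eq_tsum ℂ]

lemma aux_exp_smul_idem (M : 𝔸) (hM : M * M = M) (μ : ℂ) :
    exp (μ • M) * M = Complex.exp μ • M := by
  calc exp (μ • M) * M = (∑' k : ℕ, (k !⁻¹ : ℂ) • (μ • M) ^ k) * M := by rw [exp_eq_tsum ℂ]
    _ = ∑' k : ℕ, ((k !⁻¹ : ℂ) • (μ • M) ^ k) * M :=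
        ((expSeries_summable' (𝕂 := ℂ) (μ • M)).tsum_mul_right M).symm
    _ = ∑' k : ℕ, ((k !⁻¹ : ℂ) * μ ^ k) • M := by
        refine tsum_congr fun k => ?_
        rw [smul_pow, smul_mul_assoc, smul_mul_assoc, aux_idem_pow_mul M hM k, smul_smul]
    _ = (∑' k : ℕ, (k !⁻¹ : ℂ) * μ ^ k) • M := by
        refine Summable.tsum_smul_const ?_ M
        simpa [smul_eq_mul] using (expSeries_summable' (𝕂 := ℂ) μ)
    _ = Complex.exp μ • M := by
        congr 1
        rw [Complex.exp_eq_exp_ℂ, exp_eq_tsum ℂ]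
        simp [smul_eq_mul]

lemma aux_add_pow_eq_zero {R : Type*} [Ring R] {x y : R} (h : Commute x y) {p q : ℕ}
    (hx : x ^ p = 0) (hy : y ^ q = 0) : (x + y) ^ (p + q) = 0 := by
  rw [h.add_pow]
  refine Finset.sum_eq_zero fun k hk => ?_
  rcases le_or_gt p k with h1 | h1
  · rw [pow_eq_zero_of_le h1 hx, zero_mul, zero_mul]
  · rw [pow_eq_zero_of_le (by omega : q ≤ p + q - k) hy, mul_zero, zero_mul]

lemma aux_exp_nilpotent_bound (x : 𝔸) (Mn : ℕ) (hx : x ^ Mn = 0) :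
    ‖exp x‖ ≤ Mn * ((1 + ‖(1:𝔸)‖) * (1 + ‖x‖) ^ Mn) := by
  have hexp : exp x = ∑ k ∈ Finset.range Mn, (k !⁻¹ : ℂ) • x ^ k := by
    rw [exp_eq_tsum ℂ]
    refine tsum_eq_sum fun k hk => ?_
    rw [pow_eq_zero_of_le (by simpa using hk) hx, smul_zero]
  have h1x : (1:ℝ) ≤ 1 + ‖x‖ := by linarith [norm_nonneg x]
  rw [hexp]
  refine (norm_sum_le _ _).trans ?_
  have hterm : ∀ k ∈ Finset.range Mn, ‖((k ! : ℂ))⁻¹ • x ^ k‖ ≤ (1 + ‖(1:𝔸)‖) * (1 + ‖x‖) ^ Mn := by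
    intro k hk
    rw [norm_smul]
    have hfac : ‖((k ! : ℂ))⁻¹‖ ≤ 1 := by
      rw [norm_inv]
      refine inv_le_one_of_one_le₀ ?_
      simpa using (show (1:ℝ) ≤ (k ! : ℝ) by exact_mod_cast k.factorial_pos)
    have hpowM : (1:ℝ) ≤ (1 + ‖x‖) ^ Mn := one_le_pow₀ h1x
    have hxk : ‖x ^ k‖ ≤ (1 + ‖(1:𝔸)‖) * (1 + ‖x‖) ^ Mn := by
      rcases Nat.eq_zero_or_pos k with rfl | hkpos
      · simp only [pow_zero]
        nlinarith [norm_nonneg (1:𝔸)]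
      · have h1 := norm_pow_le' x hkpos
        have h2 : ‖x‖ ^ k ≤ (1 + ‖x‖) ^ k :=
          pow_le_pow_left₀ (norm_nonneg x) (by linarith) k
        have h3 : (1 + ‖x‖) ^ k ≤ (1 + ‖x‖) ^ Mn :=
          pow_le_pow_right₀ h1x (Finset.mem_range.mp hk).le
        nlinarith [norm_nonneg (1:𝔸)]
    calc ‖((k ! : ℂ))⁻¹‖ * ‖x ^ k‖ ≤ 1 * ‖x ^ k‖ :=
        mul_le_mul_of_nonneg_right hfac (norm_nonneg _)
      _ = ‖x ^ k‖ := one_mul _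
      _ ≤ _ := hxk
  calc ∑ k ∈ Finset.range Mn, ‖((k ! : ℂ))⁻¹ • x ^ k‖
      ≤ ∑ _k ∈ Finset.range Mn, (1 + ‖(1:𝔸)‖) * (1 + ‖x‖) ^ Mn := Finset.sum_le_sum hterm
    _ = Mn * ((1 + ‖(1:𝔸)‖) * (1 + ‖x‖) ^ Mn) := by
        rw [Finset.sum_const, Finset.card_range, nsmul_eq_mul]






lemma aux_op_bound (A₁ A₂ M : 𝔸) (l₁ l₂ : ℂ)
    (hM : M * M = M) (h12 : Commute A₁ A₂) (hM1 : Commute M A₁) (hM2 : Commute M A₂)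
    (hn1 : IsNilpotent (M * A₁ - l₁ • M)) (hn2 : IsNilpotent (M * A₂ - l₂ • M)) :
    ∃ (K : ℝ) (Mt : ℕ), 0 ≤ K ∧ ∀ t₁ : ℝ, 0 ≤ t₁ → ∀ t₂ : ℝ, 0 ≤ t₂ →
      ‖exp ((-(t₁:ℂ)) • A₁) * exp ((-(t₂:ℂ)) • A₂) * M‖
        ≤ K * (1 + t₁ + t₂) ^ Mt * Real.exp (-(t₁ * l₁.re + t₂ * l₂.re)) := by
  obtain ⟨p, hp⟩ := hn1
  obtain ⟨q, hq⟩ := hn2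
  set n₁ : 𝔸 := M * A₁ - l₁ • M with hn₁def
  set n₂ : 𝔸 := M * A₂ - l₂ • M with hn₂def
  set κ : ℝ := max ‖n₁‖ ‖n₂‖ with hκdef
  have hκ0 : 0 ≤ κ := le_trans (norm_nonneg n₁) (le_max_left _ _)
  -- commutation facts
  have hMA₁ : Commute M (M * A₁) := (Commute.refl M).mul_right hM1
  have hMA₂ : Commute M (M * A₂) := (Commute.refl M).mul_right hM2
  have hMn₁ : Commute M n₁ := hMA₁.sub_right ((Commute.refl M).smul_right l₁)
  have hMn₂ : Commute M n₂ := hMA₂.sub_right ((Commute.refl M).smul_right l₂)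
  have hMA₁M : Commute (M * A₁) M := hMA₁.symm
  have hMA₁A₂ : Commute (M * A₁) A₂ := Commute.mul_left hM2 h12
  have hx12 : Commute (M * A₁) (M * A₂) := hMA₁M.mul_right hMA₁A₂
  have hb : Commute (M * A₁) (l₂ • M) := hMA₁M.smul_right l₂
  have hc : Commute (l₁ • M) (M * A₂) := hMA₂.smul_left l₁
  have hd : Commute (l₁ • M) (l₂ • M) := (((Commute.refl M).smul_left l₁).smul_right l₂)
  have hn₁n₂ : Commute n₁ n₂ := (hx12.sub_right hb).sub_left (hc.sub_right hd)
  refine ⟨((p+q : ℕ) * ((1 + ‖(1:𝔸)‖) * (1+κ)^(p+q))) * ‖M‖, p + q, by positivity,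
    fun t₁ ht₁ t₂ ht₂ => ?_⟩
  set m : 𝔸 := (-(t₁:ℂ)) • n₁ + (-(t₂:ℂ)) • n₂ with hmdef
  set μ : ℂ := -((t₁:ℂ) * l₁) - (t₂:ℂ) * l₂ with hμdef
  set B : 𝔸 := (-(t₁:ℂ)) • A₁ + (-(t₂:ℂ)) • A₂ with hBdef
  have hBM : Commute B M :=
    ((hM1.symm).smul_left (-(t₁:ℂ))).add_left ((hM2.symm).smul_left (-(t₂:ℂ)))
  have hcomm' : Commute ((-(t₁:ℂ)) • A₁) ((-(t₂:ℂ)) • A₂) :=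
    (h12.smul_left (-(t₁:ℂ))).smul_right (-(t₂:ℂ))
  have hMA₁eq : M * A₁ = n₁ + l₁ • M := by rw [hn₁def]; abel
  have hMA₂eq : M * A₂ = n₂ + l₂ • M := by rw [hn₂def]; abel
  have hBE : B * M = m + μ • M := by
    have e1 : A₁ * M = n₁ + l₁ • M := by rw [← hM1.eq, hMA₁eq]
    have e2 : A₂ * M = n₂ + l₂ • M := by rw [← hM2.eq, hMA₂eq]
    rw [hBdef, add_mul, smul_mul_assoc, smul_mul_assoc, e1, e2, hmdef, hμdef]
    module
  have hmM : Commute m M :=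
    ((hMn₁.symm).smul_left (-(t₁:ℂ))).add_left ((hMn₂.symm).smul_left (-(t₂:ℂ)))
  have key : exp ((-(t₁:ℂ)) • A₁) * exp ((-(t₂:ℂ)) • A₂) * M
      = exp m * (Complex.exp μ • M) := by
    letI : NormedAlgebra ℚ 𝔸 := .restrictScalars ℚ ℂ 𝔸
    rw [← exp_add_of_commute hcomm', aux_exp_mul_idem B M hM hBM, hBE,
      exp_add_of_commute (hmM.smul_right μ), mul_assoc, aux_exp_smul_idem M hM μ]
  have hmpow : m ^ (p + q) = 0 := by
    have h1 : ((-(t₁:ℂ)) • n₁) ^ p = 0 := by rw [smul_pow, hp, smul_zero]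
    have h2 : ((-(t₂:ℂ)) • n₂) ^ q = 0 := by rw [smul_pow, hq, smul_zero]
    exact aux_add_pow_eq_zero ((hn₁n₂.smul_left _).smul_right _) h1 h2
  have hmnorm : ‖m‖ ≤ κ * (t₁ + t₂) := by
    calc ‖m‖ ≤ ‖(-(t₁:ℂ)) • n₁‖ + ‖(-(t₂:ℂ)) • n₂‖ := norm_add_le _ _
      _ = t₁ * ‖n₁‖ + t₂ * ‖n₂‖ := by
          rw [norm_smul, norm_smul]
          simp [abs_of_nonneg ht₁, abs_of_nonneg ht₂]
      _ ≤ t₁ * κ + t₂ * κ := by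
          gcongr
          · exact le_max_left _ _
          · exact le_max_right _ _
      _ = κ * (t₁ + t₂) := by ring
  have hm1 : 1 + ‖m‖ ≤ (1 + κ) * (1 + t₁ + t₂) := by nlinarith [norm_nonneg m]
  have hexpm : ‖exp m‖ ≤ (p+q : ℕ) * ((1 + ‖(1:𝔸)‖) * ((1+κ)^(p+q) * (1 + t₁ + t₂)^(p+q))) := by
    refine (aux_exp_nilpotent_bound m (p+q) hmpow).trans ?_
    have : (1 + ‖m‖) ^ (p+q) ≤ (1+κ)^(p+q) * (1 + t₁ + t₂)^(p+q) := by
      rw [← mul_pow]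
      exact pow_le_pow_left₀ (by linarith [norm_nonneg m]) hm1 _
    have h1 : (0:ℝ) ≤ 1 + ‖(1:𝔸)‖ := by positivity
    have h2 : (0:ℝ) ≤ ((p+q : ℕ) : ℝ) := by positivity
    exact mul_le_mul_of_nonneg_left (mul_le_mul_of_nonneg_left this h1) h2
  have hμre : μ.re = -(t₁ * l₁.re + t₂ * l₂.re) := by
    simp [hμdef, Complex.sub_re, Complex.neg_re, Complex.mul_re]
    ring
  calc ‖exp ((-(t₁:ℂ)) • A₁) * exp ((-(t₂:ℂ)) • A₂) * M‖
      = ‖exp m * (Complex.exp μ • M)‖ := by rw [key]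
    _ ≤ ‖exp m‖ * ‖Complex.exp μ • M‖ := norm_mul_le _ _
    _ = ‖exp m‖ * (Real.exp μ.re * ‖M‖) := by
        rw [norm_smul, Complex.norm_exp]
    _ ≤ ((p+q : ℕ) * ((1 + ‖(1:𝔸)‖) * ((1+κ)^(p+q) * (1 + t₁ + t₂)^(p+q)))) * (Real.exp μ.re * ‖M‖) := by
        apply mul_le_mul_of_nonneg_right hexpm (by positivity)
    _ = ((p+q : ℕ) * ((1 + ‖(1:𝔸)‖) * (1+κ)^(p+q))) * ‖M‖ * (1 + t₁ + t₂)^(p+q)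
          * Real.exp (-(t₁ * l₁.re + t₂ * l₂.re)) := by rw [hμre]; ring


end Aux



lemma aux_poly_le_exp (M : ℕ) {c : ℝ} (hc : 0 < c) :
    ∃ K : ℝ, 0 < K ∧ ∀ s : ℝ, 0 ≤ s → (1 + s) ^ M ≤ K * Real.exp (c * s) := by
  have hM1 : (0:ℝ) < M + 1 := by positivity
  set r : ℝ := min 1 (c / (M + 1)) with hr
  have hr0 : 0 < r := lt_min one_pos (by positivity)
  have hr1 : r ≤ 1 := min_le_left _ _
  have hrM : (M : ℝ) * r ≤ c := by
    calc (M:ℝ) * r ≤ (M:ℝ) * (c/(M+1)) :=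
          mul_le_mul_of_nonneg_left (min_le_right _ _) (Nat.cast_nonneg M)
      _ = c * ((M:ℝ)/(M+1)) := by ring
      _ ≤ c * 1 := by
          gcongr
          exact (div_le_one hM1).mpr (by linarith)
      _ = c := mul_one c
  refine ⟨r⁻¹ ^ M, by positivity, fun s hs => ?_⟩
  have key1 : 1 + s ≤ r⁻¹ * Real.exp (r * s) := by
    have h1 : r * (1 + s) ≤ 1 + r * s := by nlinarith
    have h2 : 1 + r * s ≤ Real.exp (r * s) := by
      linarith [Real.add_one_le_exp (r * s)]
    calc 1 + s = r⁻¹ * (r * (1 + s)) := by field_simp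
      _ ≤ r⁻¹ * Real.exp (r * s) := by
          apply mul_le_mul_of_nonneg_left (h1.trans h2) (by positivity)
  calc (1 + s) ^ M ≤ (r⁻¹ * Real.exp (r * s)) ^ M :=
        pow_le_pow_left₀ (by linarith) key1 M
    _ = r⁻¹ ^ M * Real.exp (r * s) ^ M := mul_pow _ _ _
    _ = r⁻¹ ^ M * Real.exp ((M : ℝ) * (r * s)) := by rw [← Real.exp_nat_mul]
    _ ≤ r⁻¹ ^ M * Real.exp (c * s) := by
        apply mul_le_mul_of_nonneg_left _ (by positivity)
        apply Real.exp_le_exp.mpr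
        calc (M:ℝ) * (r * s) = ((M:ℝ) * r) * s := by ring
          _ ≤ c * s := mul_le_mul_of_nonneg_right hrM hs


end ConstTermAux

open ConstTermAux NormedSpace


/-- Independence of the limit defining the constant term from the chosen direction.
Under the differential system `D_{X_i}Φ = Γ(X_i)Φ + Ψ_i` with rapidly decaying (relatively to
`e^{Re λ}`) inhomogeneous terms, the limits `lim_{t→∞} e^{−tΓ(X_i)} E Φ(a + tX_i)` exist for
`i = 1, 2` and coincide. -/
theorem constant_term_limit_independent_of_direction
    (U : Type*) [NormedAddCommGroup U] [NormedSpace ℂ U] [FiniteDimensional ℂ U]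
    (d : ℕ) (hd : 1 ≤ d)
    (Γ : EuclideanSpace ℝ (Fin d) →ₗ[ℝ] (U →L[ℂ] U))
    (hcomm : ∀ X Y : EuclideanSpace ℝ (Fin d), Commute (Γ X) (Γ Y))
    (lam : EuclideanSpace ℝ (Fin d) →ₗ[ℝ] ℂ)
    (E : U →L[ℂ] U) (hE : IsIdempotentElem E)
    (hEcomm : ∀ X : EuclideanSpace ℝ (Fin d), Commute E (Γ X))
    (hnil : ∀ X : EuclideanSpace ℝ (Fin d),
      IsNilpotent (E * (Γ X - lam X • (1 : U →L[ℂ] U))))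
    (X₁ X₂ a : EuclideanSpace ℝ (Fin d))
    (Φ : EuclideanSpace ℝ (Fin d) → U) (hΦ : Differentiable ℝ Φ)
    (Ψ₁ Ψ₂ : EuclideanSpace ℝ (Fin d) → U) (hΨ₁c : Continuous Ψ₁) (hΨ₂c : Continuous Ψ₂)
    (hode₁ : ∀ b : EuclideanSpace ℝ (Fin d),
      deriv (fun s : ℝ => Φ (b + s • X₁)) 0 = Γ X₁ (Φ b) + Ψ₁ b)
    (hode₂ : ∀ b : EuclideanSpace ℝ (Fin d),
      deriv (fun s : ℝ => Φ (b + s • X₂)) 0 = Γ X₂ (Φ b) + Ψ₂ b)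
    (C ε : ℝ) (hC : 0 < C) (hε : 0 < ε) (N : ℕ)
    (hbound₁ : ∀ t₁ ≥ (0:ℝ), ∀ t₂ ≥ (0:ℝ),
      ‖Ψ₁ (a + t₁ • X₁ + t₂ • X₂)‖
        ≤ C * (1 + t₁ + t₂) ^ N * Real.exp ((lam (t₁ • X₁ + t₂ • X₂)).re)
          * Real.exp (-ε * (t₁ + t₂)))
    (hbound₂ : ∀ t₁ ≥ (0:ℝ), ∀ t₂ ≥ (0:ℝ),
      ‖Ψ₂ (a + t₁ • X₁ + t₂ • X₂)‖
        ≤ C * (1 + t₁ + t₂) ^ N * Real.exp ((lam (t₁ • X₁ + t₂ • X₂)).re)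
          * Real.exp (-ε * (t₁ + t₂))) :
    ∃ L₁ L₂ : U,
      Tendsto (fun t : ℝ =>
          (NormedSpace.exp ((-t : ℂ) • Γ X₁)) (E (Φ (a + t • X₁)))) atTop (nhds L₁) ∧
      Tendsto (fun t : ℝ =>
          (NormedSpace.exp ((-t : ℂ) • Γ X₂)) (E (Φ (a + t • X₂)))) atTop (nhds L₂) ∧
      L₁ = L₂ := by
  classical
  have hcurve : ∀ (c X : EuclideanSpace ℝ (Fin d)) (t : ℝ),
      HasDerivAt (fun s : ℝ => Φ (c + s • X)) (fderiv ℝ Φ (c + t • X) X) t := by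
    intro c X t
    have h1 : HasDerivAt (fun s : ℝ => c + s • X) X t := by
      simpa using ((hasDerivAt_id t).smul_const X).const_add c
    exact (hΦ (c + t • X)).hasFDerivAt.comp_hasDerivAt t h1
  have hfd : ∀ (X : EuclideanSpace ℝ (Fin d)) (Ψ : EuclideanSpace ℝ (Fin d) → U),
      (∀ b, deriv (fun s : ℝ => Φ (b + s • X)) 0 = Γ X (Φ b) + Ψ b) →
      ∀ b, fderiv ℝ Φ b X = Γ X (Φ b) + Ψ b := by
    intro X Ψ hode b
    have h0 := (hcurve b X 0).deriv
    rw [hode b] at h0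
    simpa using h0.symm
  have hΦd : ∀ (c X : EuclideanSpace ℝ (Fin d)) (Ψ : EuclideanSpace ℝ (Fin d) → U),
      (∀ b, deriv (fun s : ℝ => Φ (b + s • X)) 0 = Γ X (Φ b) + Ψ b) →
      ∀ t : ℝ, HasDerivAt (fun s : ℝ => Φ (c + s • X))
        (Γ X (Φ (c + t • X)) + Ψ (c + t • X)) t := by
    intro c X Ψ hode t
    have h := hcurve c X t
    rwa [hfd X Ψ hode] at h
  -- derivative of the exponential factor
  have hde : ∀ (A : U →L[ℂ] U) (t : ℝ),
      HasDerivAt (fun s : ℝ => exp ((-(s : ℂ)) • A)) (exp ((-(t : ℂ)) • A) * (-A)) t := by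
    intro A t
    have h1 : HasDerivAt (fun s : ℝ => exp (s • (-A))) (exp (t • (-A)) * (-A)) t :=
      hasDerivAt_exp_smul_const (-A) t
    have he : ∀ s : ℝ, exp (s • (-A)) = exp ((-(s : ℂ)) • A) := by
      intro s
      congr 1
      rw [smul_neg, ← neg_smul]
      norm_cast
    have h2 : (fun s : ℝ => exp (s • (-A))) = fun s : ℝ => exp ((-(s : ℂ)) • A) :=
      funext he
    rw [h2, he t] at h1
    exact h1
  set G : ℝ → ℝ → U := fun t₁ t₂ =>
    (exp ((-(t₁ : ℂ)) • Γ X₁) * exp ((-(t₂ : ℂ)) • Γ X₂))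
      (E (Φ (a + t₁ • X₁ + t₂ • X₂))) with hGdef
  set P₁f : ℝ → ℝ → U := fun t₁ t₂ =>
    (exp ((-(t₁ : ℂ)) • Γ X₁) * exp ((-(t₂ : ℂ)) • Γ X₂))
      (E (Ψ₁ (a + t₁ • X₁ + t₂ • X₂))) with hP₁def
  set P₂f : ℝ → ℝ → U := fun t₁ t₂ =>
    (exp ((-(t₁ : ℂ)) • Γ X₁) * exp ((-(t₂ : ℂ)) • Γ X₂))
      (E (Ψ₂ (a + t₁ • X₁ + t₂ • X₂))) with hP₂def
  have hEA : ∀ (X : EuclideanSpace ℝ (Fin d)) (u : U), E (Γ X u) = Γ X (E u) := by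
    intro X u
    have h := congrArg (fun T : U →L[ℂ] U => T u) (hEcomm X).eq
    simpa using h
  set RS : (U →L[ℂ] U) →L[ℝ] (U →L[ℝ] U) :=
    ContinuousLinearMap.restrictScalarsL ℂ U U ℝ ℝ with hRSdef
  -- derivative in the first variable
  have hG₁ : ∀ t₂ t₁ : ℝ, HasDerivAt (fun t => G t t₂) (P₁f t₁ t₂) t₁ := by
    intro t₂ t₁
    simp only [hGdef, hP₁def]
    have hop : HasDerivAt
        (fun t : ℝ => exp ((-(t : ℂ)) • Γ X₁) * exp ((-(t₂ : ℂ)) • Γ X₂))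
        (exp ((-(t₁ : ℂ)) • Γ X₁) * (-Γ X₁) * exp ((-(t₂ : ℂ)) • Γ X₂)) t₁ :=
      (hde (Γ X₁) t₁).mul_const _
    have hopR := RS.hasFDerivAt.comp_hasDerivAt t₁ hop
    have hv1 : HasDerivAt (fun s : ℝ => Φ (a + s • X₁ + t₂ • X₂))
        (Γ X₁ (Φ (a + t₁ • X₁ + t₂ • X₂)) + Ψ₁ (a + t₁ • X₁ + t₂ • X₂)) t₁ := by
      have h0 := hΦd (a + t₂ • X₂) X₁ Ψ₁ hode₁ t₁
      have hpt : ∀ s : ℝ, a + t₂ • X₂ + s • X₁ = a + s • X₁ + t₂ • X₂ := fun s => by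
        rw [add_right_comm]
      simpa [hpt] using h0
    have hv : HasDerivAt (fun t : ℝ => (E.restrictScalars ℝ) (Φ (a + t • X₁ + t₂ • X₂)))
        ((E.restrictScalars ℝ)
          (Γ X₁ (Φ (a + t₁ • X₁ + t₂ • X₂)) + Ψ₁ (a + t₁ • X₁ + t₂ • X₂))) t₁ :=
      (E.restrictScalars ℝ).hasFDerivAt.comp_hasDerivAt t₁ hv1
    have hcomb := hopR.clm_apply hv
    simp only [hRSdef, ContinuousLinearMap.coe_restrict_scalarsL', Function.comp,
      ContinuousLinearMap.coe_restrictScalars'] at hcomb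
    refine hcomb.congr_deriv ?_
    have hA₁e₂ : ∀ u : U, Γ X₁ (exp ((-(t₂ : ℂ)) • Γ X₂) u)
        = exp ((-(t₂ : ℂ)) • Γ X₂) (Γ X₁ u) := by
      intro u
      have hc : Commute (Γ X₁) (exp ((-(t₂ : ℂ)) • Γ X₂)) :=
        ((hcomm X₁ X₂).smul_right _).exp_right
      have h := congrArg (fun T : U →L[ℂ] U => T u) hc.eq
      simpa using h
    simp only [ContinuousLinearMap.mul_apply, map_add, ContinuousLinearMap.neg_apply, map_neg]
    rw [hEA X₁, ← hA₁e₂]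
    abel
  -- derivative in the second variable
  have hG₂ : ∀ t₁ t₂ : ℝ, HasDerivAt (fun t => G t₁ t) (P₂f t₁ t₂) t₂ := by
    intro t₁ t₂
    simp only [hGdef, hP₂def]
    have hop : HasDerivAt
        (fun t : ℝ => exp ((-(t₁ : ℂ)) • Γ X₁) * exp ((-(t : ℂ)) • Γ X₂))
        (exp ((-(t₁ : ℂ)) • Γ X₁) * (exp ((-(t₂ : ℂ)) • Γ X₂) * (-Γ X₂))) t₂ :=
      (hde (Γ X₂) t₂).const_mul _
    have hopR := RS.hasFDerivAt.comp_hasDerivAt t₂ hop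
    have hv1 : HasDerivAt (fun s : ℝ => Φ (a + t₁ • X₁ + s • X₂))
        (Γ X₂ (Φ (a + t₁ • X₁ + t₂ • X₂)) + Ψ₂ (a + t₁ • X₁ + t₂ • X₂)) t₂ :=
      hΦd (a + t₁ • X₁) X₂ Ψ₂ hode₂ t₂
    have hv : HasDerivAt (fun t : ℝ => (E.restrictScalars ℝ) (Φ (a + t₁ • X₁ + t • X₂)))
        ((E.restrictScalars ℝ)
          (Γ X₂ (Φ (a + t₁ • X₁ + t₂ • X₂)) + Ψ₂ (a + t₁ • X₁ + t₂ • X₂))) t₂ :=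
      (E.restrictScalars ℝ).hasFDerivAt.comp_hasDerivAt t₂ hv1
    have hcomb := hopR.clm_apply hv
    simp only [hRSdef, ContinuousLinearMap.coe_restrict_scalarsL', Function.comp,
      ContinuousLinearMap.coe_restrictScalars'] at hcomb
    refine hcomb.congr_deriv ?_
    simp only [ContinuousLinearMap.mul_apply, map_add, ContinuousLinearMap.neg_apply, map_neg]
    rw [hEA X₂]
    abel
  -- operator norm bound
  have hnil₁' : IsNilpotent (E * Γ X₁ - lam X₁ • E) := by
    have h := hnil X₁
    have heq : E * (Γ X₁ - lam X₁ • 1) = E * Γ X₁ - lam X₁ • E := by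
      rw [mul_sub, mul_smul_comm, mul_one]
    rwa [heq] at h
  have hnil₂' : IsNilpotent (E * Γ X₂ - lam X₂ • E) := by
    have h := hnil X₂
    have heq : E * (Γ X₂ - lam X₂ • 1) = E * Γ X₂ - lam X₂ • E := by
      rw [mul_sub, mul_smul_comm, mul_one]
    rwa [heq] at h
  obtain ⟨K, Mt, hK0, hKbd⟩ := ConstTermAux.aux_op_bound (Γ X₁) (Γ X₂) E (lam X₁) (lam X₂)
    hE (hcomm X₁ X₂) (hEcomm X₁) (hEcomm X₂) hnil₁' hnil₂'
  have hKC : (0:ℝ) ≤ K * C := mul_nonneg hK0 hC.le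
  have hre : ∀ t₁ t₂ : ℝ, (lam (t₁ • X₁ + t₂ • X₂)).re
      = t₁ * (lam X₁).re + t₂ * (lam X₂).re := by
    intro t₁ t₂
    rw [map_add, map_smul, map_smul]
    simp [Complex.real_smul, Complex.add_re, Complex.mul_re]
  have hNorm₁ : ∀ t₁, 0 ≤ t₁ → ∀ t₂, 0 ≤ t₂ → ‖P₁f t₁ t₂‖ ≤
      (K * C) * (1 + t₁ + t₂) ^ (Mt + N) * Real.exp (-ε * (t₁ + t₂)) := by
    intro t₁ ht₁ t₂ ht₂
    have happ : P₁f t₁ t₂ = (exp ((-(t₁:ℂ)) • Γ X₁) * exp ((-(t₂:ℂ)) • Γ X₂) * E)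
        (Ψ₁ (a + t₁ • X₁ + t₂ • X₂)) := by simp [hP₁def, ContinuousLinearMap.mul_apply]
    have h1 : ‖P₁f t₁ t₂‖ ≤ ‖exp ((-(t₁:ℂ)) • Γ X₁) * exp ((-(t₂:ℂ)) • Γ X₂) * E‖
        * ‖Ψ₁ (a + t₁ • X₁ + t₂ • X₂)‖ := by
      rw [happ]; exact ContinuousLinearMap.le_opNorm _ _
    have h2 := hKbd t₁ ht₁ t₂ ht₂
    have h3 := hbound₁ t₁ ht₁ t₂ ht₂
    rw [hre t₁ t₂] at h3
    have h4 := mul_le_mul h2 h3 (norm_nonneg _)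
      (mul_nonneg (mul_nonneg hK0 (by positivity)) (Real.exp_nonneg _))
    refine h1.trans (h4.trans (le_of_eq ?_))
    have hexp : Real.exp (-(t₁ * (lam X₁).re + t₂ * (lam X₂).re))
        * Real.exp (t₁ * (lam X₁).re + t₂ * (lam X₂).re) = 1 := by
      rw [← Real.exp_add, neg_add_cancel, Real.exp_zero]
    rw [pow_add]
    linear_combination (K*C*(1+t₁+t₂)^Mt*(1+t₁+t₂)^N*Real.exp (-ε*(t₁+t₂))) * hexp
  have hNorm₂ : ∀ t₁, 0 ≤ t₁ → ∀ t₂, 0 ≤ t₂ → ‖P₂f t₁ t₂‖ ≤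
      (K * C) * (1 + t₁ + t₂) ^ (Mt + N) * Real.exp (-ε * (t₁ + t₂)) := by
    intro t₁ ht₁ t₂ ht₂
    have happ : P₂f t₁ t₂ = (exp ((-(t₁:ℂ)) • Γ X₁) * exp ((-(t₂:ℂ)) • Γ X₂) * E)
        (Ψ₂ (a + t₁ • X₁ + t₂ • X₂)) := by simp [hP₂def, ContinuousLinearMap.mul_apply]
    have h1 : ‖P₂f t₁ t₂‖ ≤ ‖exp ((-(t₁:ℂ)) • Γ X₁) * exp ((-(t₂:ℂ)) • Γ X₂) * E‖
        * ‖Ψ₂ (a + t₁ • X₁ + t₂ • X₂)‖ := by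
      rw [happ]; exact ContinuousLinearMap.le_opNorm _ _
    have h2 := hKbd t₁ ht₁ t₂ ht₂
    have h3 := hbound₂ t₁ ht₁ t₂ ht₂
    rw [hre t₁ t₂] at h3
    have h4 := mul_le_mul h2 h3 (norm_nonneg _)
      (mul_nonneg (mul_nonneg hK0 (by positivity)) (Real.exp_nonneg _))
    refine h1.trans (h4.trans (le_of_eq ?_))
    have hexp : Real.exp (-(t₁ * (lam X₁).re + t₂ * (lam X₂).re))
        * Real.exp (t₁ * (lam X₁).re + t₂ * (lam X₂).re) = 1 := by
      rw [← Real.exp_add, neg_add_cancel, Real.exp_zero]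
    rw [pow_add]
    linear_combination (K*C*(1+t₁+t₂)^Mt*(1+t₁+t₂)^N*Real.exp (-ε*(t₁+t₂))) * hexp
  -- continuity of the slices
  letI : NormedAlgebra ℚ (U →L[ℂ] U) := .restrictScalars ℚ ℂ (U →L[ℂ] U)
  have hcontP₁ : ∀ T : ℝ, Continuous (fun s : ℝ => P₁f s T) := by
    intro T
    simp only [hP₁def]
    refine Continuous.clm_apply ?_ ?_
    · exact ((exp_continuous (𝔸 := U →L[ℂ] U)).comp
        ((Complex.continuous_ofReal.neg).smul continuous_const)).mul continuous_const
    · exact E.continuous.comp (hΨ₁c.comp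
        ((continuous_const.add (continuous_id.smul continuous_const)).add continuous_const))
  have hcontP₁' : ∀ T : ℝ, Continuous (fun s : ℝ => P₁f T s) := by
    intro T
    simp only [hP₁def]
    refine Continuous.clm_apply ?_ ?_
    · exact continuous_const.mul ((exp_continuous (𝔸 := U →L[ℂ] U)).comp
        ((Complex.continuous_ofReal.neg).smul continuous_const))
    · exact E.continuous.comp (hΨ₁c.comp
        (continuous_const.add (continuous_id.smul continuous_const)))
  have hcontP₂ : ∀ T : ℝ, Continuous (fun s : ℝ => P₂f T s) := by
    intro T
    simp only [hP₂def]
    refine Continuous.clm_apply ?_ ?_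
    · exact continuous_const.mul ((exp_continuous (𝔸 := U →L[ℂ] U)).comp
        ((Complex.continuous_ofReal.neg).smul continuous_const))
    · exact E.continuous.comp (hΨ₂c.comp
        (continuous_const.add (continuous_id.smul continuous_const)))
  -- integrability on [0, ∞)
  obtain ⟨K₂, hK₂0, hK₂⟩ := ConstTermAux.aux_poly_le_exp (Mt + N) (half_pos hε)
  have hint₁ : MeasureTheory.IntegrableOn (fun s => P₁f s 0) (Set.Ioi (0:ℝ)) := by
    refine MeasureTheory.Integrable.mono'
      ((exp_neg_integrableOn_Ioi 0 (half_pos hε)).const_mul ((K * C) * K₂))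
      ((hcontP₁ 0).aestronglyMeasurable) ?_
    refine (MeasureTheory.ae_restrict_iff' measurableSet_Ioi).mpr (Filter.Eventually.of_forall ?_)
    intro s hs
    have hs0 : (0:ℝ) ≤ s := (le_of_lt hs)
    have h1 := hNorm₁ s hs0 0 le_rfl
    simp only [add_zero] at h1
    refine h1.trans ?_
    have h3 := hK₂ s hs0
    calc (K*C) * (1+s)^(Mt+N) * Real.exp (-ε*s)
        ≤ (K*C) * (K₂ * Real.exp (ε/2*s)) * Real.exp (-ε*s) := by
          apply mul_le_mul_of_nonneg_right (mul_le_mul_of_nonneg_left h3 hKC) (Real.exp_nonneg _)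
      _ = (K*C)*K₂ * (Real.exp (ε/2*s) * Real.exp (-ε*s)) := by ring
      _ = (K*C)*K₂ * Real.exp (-(ε/2)*s) := by
          rw [← Real.exp_add]; ring_nf
  have hint₂ : MeasureTheory.IntegrableOn (fun s => P₂f 0 s) (Set.Ioi (0:ℝ)) := by
    refine MeasureTheory.Integrable.mono'
      ((exp_neg_integrableOn_Ioi 0 (half_pos hε)).const_mul ((K * C) * K₂))
      ((hcontP₂ 0).aestronglyMeasurable) ?_
    refine (MeasureTheory.ae_restrict_iff' measurableSet_Ioi).mpr (Filter.Eventually.of_forall ?_)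
    intro s hs
    have hs0 : (0:ℝ) ≤ s := (le_of_lt hs)
    have h1 := hNorm₂ 0 le_rfl s hs0
    simp only [add_zero, zero_add] at h1
    refine h1.trans ?_
    have h3 := hK₂ s hs0
    calc (K*C) * (1+s)^(Mt+N) * Real.exp (-ε*s)
        ≤ (K*C) * (K₂ * Real.exp (ε/2*s)) * Real.exp (-ε*s) := by
          apply mul_le_mul_of_nonneg_right (mul_le_mul_of_nonneg_left h3 hKC) (Real.exp_nonneg _)
      _ = (K*C)*K₂ * (Real.exp (ε/2*s) * Real.exp (-ε*s)) := by ring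
      _ = (K*C)*K₂ * Real.exp (-(ε/2)*s) := by
          rw [← Real.exp_add]; ring_nf
  -- fundamental theorem of calculus
  have hFTC₁ : ∀ T : ℝ, (∫ s in (0:ℝ)..T, P₁f s 0) = G T 0 - G 0 0 := fun T =>
    intervalIntegral.integral_eq_sub_of_hasDerivAt (fun t _ => hG₁ 0 t)
      ((hcontP₁ 0).intervalIntegrable 0 T)
  have hFTC₂ : ∀ T : ℝ, (∫ s in (0:ℝ)..T, P₂f 0 s) = G 0 T - G 0 0 := fun T =>
    intervalIntegral.integral_eq_sub_of_hasDerivAt (fun t _ => hG₂ 0 t)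
      ((hcontP₂ 0).intervalIntegrable 0 T)
  have hlim₁ := MeasureTheory.intervalIntegral_tendsto_integral_Ioi 0 hint₁ tendsto_id
  have hlim₂ := MeasureTheory.intervalIntegral_tendsto_integral_Ioi 0 hint₂ tendsto_id
  simp only [id_eq] at hlim₁ hlim₂
  have htend₁ : Tendsto (fun T => G T 0) atTop
      (nhds (G 0 0 + ∫ s in Set.Ioi (0:ℝ), P₁f s 0)) := by
    refine (tendsto_const_nhds.add hlim₁).congr fun T => ?_
    rw [hFTC₁ T]; abel
  have htend₂ : Tendsto (fun T => G 0 T) atTop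
      (nhds (G 0 0 + ∫ s in Set.Ioi (0:ℝ), P₂f 0 s)) := by
    refine (tendsto_const_nhds.add hlim₂).congr fun T => ?_
    rw [hFTC₂ T]; abel
  -- the two limits agree
  obtain ⟨K₃, hK₃0, hK₃⟩ := ConstTermAux.aux_poly_le_exp (Mt + N + 1)
    (show (0:ℝ) < ε/4 by positivity)
  have hzero : Tendsto (fun T => G T 0 - G 0 T) atTop (nhds 0) := by
    have hgb : Tendsto (fun T : ℝ => 2*(K*C)*K₃ * Real.exp (-(ε/2)*T)) atTop (nhds 0) := by
      have h1 : Tendsto (fun T : ℝ => (ε/2) * T) atTop atTop :=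
        Tendsto.const_mul_atTop (half_pos hε) tendsto_id
      have h2 : Tendsto (fun T : ℝ => Real.exp (-((ε/2) * T))) atTop (nhds 0) :=
        Real.tendsto_exp_neg_atTop_nhds_zero.comp h1
      have h3 := h2.const_mul (2*(K*C)*K₃)
      simp only [mul_zero] at h3
      refine h3.congr fun T => ?_
      ring_nf
    refine squeeze_zero_norm' ?_ hgb
    filter_upwards [eventually_ge_atTop (0:ℝ)] with T hT
    have h1 : (∫ s in (0:ℝ)..T, P₁f s T) = G T T - G 0 T :=
      intervalIntegral.integral_eq_sub_of_hasDerivAt (fun t _ => hG₁ T t)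
        ((hcontP₁ T).intervalIntegrable 0 T)
    have h2 : (∫ s in (0:ℝ)..T, P₂f T s) = G T T - G T 0 :=
      intervalIntegral.integral_eq_sub_of_hasDerivAt (fun t _ => hG₂ T t)
        ((hcontP₂ T).intervalIntegrable 0 T)
    have heqn : G T 0 - G 0 T = (∫ s in (0:ℝ)..T, P₁f s T) - ∫ s in (0:ℝ)..T, P₂f T s := by
      rw [h1, h2]; abel
    have hb1 : ‖∫ s in (0:ℝ)..T, P₁f s T‖
        ≤ ((K*C) * (1+2*T)^(Mt+N) * Real.exp (-ε*T)) * |T - 0| := by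
      apply intervalIntegral.norm_integral_le_of_norm_le_const
      intro s hs
      rw [Set.uIoc_of_le hT] at hs
      obtain ⟨hs0, hsT⟩ := hs
      refine (hNorm₁ s hs0.le T hT).trans ?_
      have e1 : (1+s+T)^(Mt+N) ≤ (1+2*T)^(Mt+N) :=
        pow_le_pow_left₀ (by linarith) (by linarith) _
      have e2 : Real.exp (-ε*(s+T)) ≤ Real.exp (-ε*T) := Real.exp_le_exp.mpr (by nlinarith)
      apply mul_le_mul (mul_le_mul_of_nonneg_left e1 hKC) e2 (Real.exp_nonneg _)
        (mul_nonneg hKC (pow_nonneg (by linarith) _))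
    have hb2 : ‖∫ s in (0:ℝ)..T, P₂f T s‖
        ≤ ((K*C) * (1+2*T)^(Mt+N) * Real.exp (-ε*T)) * |T - 0| := by
      apply intervalIntegral.norm_integral_le_of_norm_le_const
      intro s hs
      rw [Set.uIoc_of_le hT] at hs
      obtain ⟨hs0, hsT⟩ := hs
      refine (hNorm₂ T hT s hs0.le).trans ?_
      have e1 : (1+T+s)^(Mt+N) ≤ (1+2*T)^(Mt+N) :=
        pow_le_pow_left₀ (by linarith) (by linarith) _
      have e2 : Real.exp (-ε*(T+s)) ≤ Real.exp (-ε*T) := Real.exp_le_exp.mpr (by nlinarith)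
      apply mul_le_mul (mul_le_mul_of_nonneg_left e1 hKC) e2 (Real.exp_nonneg _)
        (mul_nonneg hKC (pow_nonneg (by linarith) _))
    rw [sub_zero, abs_of_nonneg hT] at hb1 hb2
    have hb : ‖G T 0 - G 0 T‖ ≤ 2*((K*C) * (1+2*T)^(Mt+N) * Real.exp (-ε*T) * T) := by
      rw [heqn]
      refine (norm_sub_le _ _).trans ?_
      linarith
    refine hb.trans ?_
    have h5 : (1+2*T)^(Mt+N) * T ≤ (1+2*T)^(Mt+N+1) := by
      rw [pow_succ]
      have hnn : (0:ℝ) ≤ (1+2*T)^(Mt+N) := pow_nonneg (by linarith) _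
      exact mul_le_mul_of_nonneg_left (by linarith) hnn
    have h6 : (1+2*T)^(Mt+N+1) ≤ K₃ * Real.exp ((ε/4)*(2*T)) := by
      have h := hK₃ (2*T) (by linarith)
      calc (1+2*T)^(Mt+N+1) ≤ K₃ * Real.exp (ε/4*(2*T)) := h
        _ = K₃ * Real.exp ((ε/4)*(2*T)) := rfl
    have h7 : Real.exp ((ε/4)*(2*T)) * Real.exp (-ε*T) = Real.exp (-(ε/2)*T) := by
      rw [← Real.exp_add]; ring_nf
    calc 2*((K*C) * (1+2*T)^(Mt+N) * Real.exp (-ε*T) * T)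
        = 2*(K*C) * ((1+2*T)^(Mt+N) * T) * Real.exp (-ε*T) := by ring
      _ ≤ 2*(K*C) * (1+2*T)^(Mt+N+1) * Real.exp (-ε*T) := by
          apply mul_le_mul_of_nonneg_right
            (mul_le_mul_of_nonneg_left h5 (by linarith)) (Real.exp_nonneg _)
      _ ≤ 2*(K*C) * (K₃ * Real.exp ((ε/4)*(2*T))) * Real.exp (-ε*T) := by
          apply mul_le_mul_of_nonneg_right
            (mul_le_mul_of_nonneg_left h6 (by linarith)) (Real.exp_nonneg _)
      _ = 2*(K*C)*K₃ * (Real.exp ((ε/4)*(2*T)) * Real.exp (-ε*T)) := by ring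
      _ = 2*(K*C)*K₃ * Real.exp (-(ε/2)*T) := by rw [h7]
  -- conclusion
  refine ⟨G 0 0 + ∫ s in Set.Ioi (0:ℝ), P₁f s 0, G 0 0 + ∫ s in Set.Ioi (0:ℝ), P₂f 0 s,
    ?_, ?_, ?_⟩
  · have hm : (fun t : ℝ => (exp ((-t : ℂ) • Γ X₁)) (E (Φ (a + t • X₁))))
        = fun T : ℝ => G T 0 := by
      funext t
      simp [hGdef]
    rw [hm]
    exact htend₁
  · have hm : (fun t : ℝ => (exp ((-t : ℂ) • Γ X₂)) (E (Φ (a + t • X₂))))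
        = fun T : ℝ => G 0 T := by
      funext t
      simp [hGdef]
    rw [hm]
    exact htend₂
  · have hsub : Tendsto (fun T => G T 0 - G 0 T) atTop
        (nhds ((G 0 0 + ∫ s in Set.Ioi (0:ℝ), P₁f s 0)
          - (G 0 0 + ∫ s in Set.Ioi (0:ℝ), P₂f 0 s))) := htend₁.sub htend₂
    have h := tendsto_nhds_unique hsub hzero
    exact sub_eq_zero.mp h
end

section
/- Let U be a finite-dimensional complex normed vector space, d ≥ 1, and Γ : ℝ^d → End(U) an ℝ-linear map whose values pairwise commute. Let λ : ℝ^d → ℂ be ℝ-linear and let E ∈ End(U) be an idempotent commuting with Γ(X) for all X ∈ ℝ^d and such that E ∘ (Γ(X) − λ(X)·Id) is nilpotent for all X ∈ ℝ^d. Let X, Y, a ∈ ℝ^d, let Φ : ℝ^d → U be differentiable, and let Ψ_X, Ψ_Y : ℝ^d → U be continuous with D_XΦ(b) = Γ(X) Φ(b) + Ψ_X(b) and D_YΦ(b) = Γ(Y) Φ(b) + Ψ_Y(b) for all b ∈ ℝ^d. Assume there exist C, ε > 0 and N ∈ ℕ such that, for all s ∈ [0,1] and t ≥ 0, both ‖Ψ_X(a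 + sX + tY)‖ and ‖Ψ_Y(a + sX + tY)‖ are at most C (1+t)^N e^{Re λ(sX + tY)} e^{−ε t}. Then the limits v₀ = lim_{t→+∞} e^{−tΓ(Y)} E Φ(a + tY) and v₁ = lim_{t→+∞} e^{−tΓ(Y)} E Φ(a + X + tY) exist and satisfy v₁ = e^{Γ(X)} v₀. -/
open Filter
open scoped Topology

section AuxLemmas
open NormedSpace

private lemma aux_poly_exp (p : ℕ) {ε : ℝ} (hε : 0 < ε) :
    ∃ c : ℝ, 0 < c ∧ ∀ t : ℝ, 0 ≤ t →
      (1+t)^p * Real.exp (-ε * t) ≤ c * Real.exp (-(ε/2) * t) := by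
  set δ : ℝ := min (ε/(2*(p+1))) 1 with hδdef
  have hδpos : 0 < δ := lt_min (by positivity) one_pos
  have hδ1 : δ ≤ 1 := min_le_right _ _
  have hδle : δ ≤ ε/(2*(p+1)) := min_le_left _ _
  refine ⟨(1/δ)^p, by positivity, fun t ht => ?_⟩
  have h1 : 1 + t ≤ (1/δ) * Real.exp (δ * t) := by
    have h2 : δ * (1+t) ≤ 1 + δ*t := by nlinarith
    have h3 : 1 + δ*t ≤ Real.exp (δ*t) := by
      have := Real.add_one_le_exp (δ*t); linarith
    calc 1+t = (1/δ)*(δ*(1+t)) := by field_simp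
    _ ≤ (1/δ)*Real.exp (δ*t) := by
        exact mul_le_mul_of_nonneg_left (h2.trans h3) (by positivity)
  have h4 : (1+t)^p ≤ (1/δ)^p * Real.exp ((p*δ)*t) := by
    calc (1+t)^p ≤ ((1/δ) * Real.exp (δ*t))^p := by
          exact pow_le_pow_left₀ (by linarith) h1 p
    _ = (1/δ)^p * Real.exp ((p*δ)*t) := by
        rw [mul_pow, ← Real.exp_nat_mul]; ring_nf
  have h5 : (p:ℝ) * δ ≤ ε/2 := by
    have hp1 : (0:ℝ) < (p:ℝ)+1 := by positivity
    have h6 : (p:ℝ) * δ ≤ ((p:ℝ)+1) * (ε/(2*((p:ℝ)+1))) := by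
      apply mul_le_mul (by linarith) hδle hδpos.le (by linarith)
    calc (p:ℝ)*δ ≤ ((p:ℝ)+1) * (ε/(2*((p:ℝ)+1))) := h6
    _ = ε/2 := by field_simp
  calc (1+t)^p * Real.exp (-ε*t)
      ≤ ((1/δ)^p * Real.exp ((p*δ)*t)) * Real.exp (-ε*t) := by
        exact mul_le_mul_of_nonneg_right h4 (Real.exp_pos _).le
    _ = (1/δ)^p * Real.exp ((p*δ)*t + -ε*t) := by rw [mul_assoc, ← Real.exp_add]
    _ ≤ (1/δ)^p * Real.exp (-(ε/2)*t) := by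
        apply mul_le_mul_of_nonneg_left _ (by positivity)
        apply Real.exp_le_exp.2
        nlinarith

private lemma aux_exp_smul_one {𝔸 : Type*} [NormedRing 𝔸] [NormedAlgebra ℂ 𝔸] [CompleteSpace 𝔸]
    (c : ℂ) : exp (c • (1:𝔸)) = Complex.exp c • (1:𝔸) := by
  rw [← Algebra.algebraMap_eq_smul_one, ← algebraMap_exp_comm,
    Algebra.algebraMap_eq_smul_one, Complex.exp_eq_exp_ℂ]

private lemma aux_exp_nilpotent {𝔸 : Type*} [NormedRing 𝔸] [NormedAlgebra ℂ 𝔸] [CompleteSpace 𝔸]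
    (A E : 𝔸) (μ : ℂ) (hcom : Commute E A) (hE : E * E = E)
    (hnil : IsNilpotent (E * (A - μ • 1))) :
    ∃ (n : ℕ) (K : ℝ), 0 ≤ K ∧ ∀ t : ℝ, 0 ≤ t →
      ‖exp (t • (-A)) * E‖ ≤ K * (1+t)^n * Real.exp (-(t * μ.re)) := by
  obtain ⟨n₀, hn₀⟩ := hnil
  set B : 𝔸 := A - μ • 1 with hBdef
  set m : ℕ := n₀ + 1 with hmdef
  have hm : (E * B)^m = 0 := by rw [pow_succ, hn₀, zero_mul]
  have hcomB : Commute E B := hcom.sub_right ((Commute.one_right E).smul_right μ)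
  have hEBm : E * B^m = 0 := by
    have h1 : (E*B)^m = E^m * B^m := hcomB.mul_pow m
    have hEm : E^m = E := IsIdempotentElem.pow_succ_eq n₀ hE
    rw [h1, hEm] at hm; exact hm
  have hBmE : B^m * E = 0 := by
    rw [← (hcomB.pow_right m).eq, hEBm]
  have key : ∀ s : ℝ, exp (s • (-B)) * E
      = ∑ k ∈ Finset.range m, (s^k * ((k.factorial : ℝ))⁻¹) • ((-B)^k * E) := by
    intro s
    have hs : Summable fun k : ℕ => ((k.factorial : ℝ))⁻¹ • (s • (-B))^k :=
      expSeries_summable' (𝕂 := ℝ) (s • (-B))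
    rw [exp_eq_tsum ℝ, ← hs.tsum_mul_right E]
    rw [tsum_eq_sum (s := Finset.range m) ?h]
    · apply Finset.sum_congr rfl
      intro k _
      rw [smul_mul_assoc, smul_pow s (-B) k, smul_mul_assoc, smul_smul, mul_comm]
    · intro k hk
      have hk' : m ≤ k := le_of_not_gt (fun h => hk (Finset.mem_range.2 h))
      have hBk : B^k * E = 0 := by
        have h2 : B ^ k = B^(k-m) * B^m := by rw [← pow_add]; congr 1; omega
        rw [h2, mul_assoc, hBmE, mul_zero]
      have hnBk : (-B)^k * E = 0 := by
        rw [neg_pow, mul_assoc, hBk, mul_zero]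
      rw [smul_mul_assoc, smul_pow s (-B) k, smul_mul_assoc, hnBk, smul_zero, smul_zero]
  refine ⟨m, ∑ k ∈ Finset.range m, ‖(-B)^k * E‖,
    Finset.sum_nonneg (fun _ _ => norm_nonneg _), fun t ht => ?_⟩
  have h1 : ((t:ℝ) • μ) • (1:𝔸) = t • (μ • (1:𝔸)) := smul_assoc t μ (1:𝔸)
  have hA : t • (-A) = (-((t:ℝ) • μ)) • (1:𝔸) + t • (-B) := by
    rw [hBdef, neg_smul, h1, smul_neg, smul_neg, smul_sub]
    abel
  have hsplit : exp (t • (-A)) = Complex.exp (-((t:ℝ) • μ)) • exp (t • (-B)) := by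
    letI : NormedAlgebra ℚ 𝔸 := .restrictScalars ℚ ℂ 𝔸
    rw [hA, exp_add_of_commute ((Commute.one_left (t • (-B))).smul_left _),
      aux_exp_smul_one, smul_mul_assoc, one_mul]
  have hnorm : ‖Complex.exp (-((t:ℝ) • μ))‖ = Real.exp (-(t * μ.re)) := by
    rw [Complex.norm_exp]
    congr 1
    simp [Complex.real_smul]
  have hsum : ‖∑ k ∈ Finset.range m, (t^k * ((k.factorial : ℝ))⁻¹) • ((-B)^k * E)‖
      ≤ (1+t)^m * ∑ k ∈ Finset.range m, ‖(-B)^k * E‖ := by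
    calc ‖∑ k ∈ Finset.range m, (t^k * ((k.factorial : ℝ))⁻¹) • ((-B)^k * E)‖
        ≤ ∑ k ∈ Finset.range m, ‖(t^k * ((k.factorial : ℝ))⁻¹) • ((-B)^k * E)‖ :=
          norm_sum_le _ _
      _ ≤ ∑ k ∈ Finset.range m, (1+t)^m * ‖(-B)^k * E‖ := by
          apply Finset.sum_le_sum
          intro k hk
          rw [norm_smul]
          have h2 : t^k ≤ (1+t)^m :=
            (pow_le_pow_left₀ ht (by linarith) k).trans
              (pow_le_pow_right₀ (by linarith) (le_of_lt (Finset.mem_range.1 hk)))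
          have h3 : ((k.factorial:ℝ))⁻¹ ≤ 1 := by
            rw [inv_le_one_iff₀]
            right
            exact_mod_cast k.factorial_pos
          have h4 : ‖(t^k * ((k.factorial : ℝ))⁻¹ : ℝ)‖ ≤ (1+t)^m := by
            rw [Real.norm_eq_abs, abs_of_nonneg (by positivity)]
            nlinarith [pow_nonneg ht k, inv_nonneg.2 (Nat.cast_nonneg (α := ℝ) k.factorial)]
          exact mul_le_mul_of_nonneg_right h4 (norm_nonneg _)
      _ = (1+t)^m * ∑ k ∈ Finset.range m, ‖(-B)^k * E‖ := by rw [Finset.mul_sum]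
  calc ‖exp (t • (-A)) * E‖
      = Real.exp (-(t * μ.re))
          * ‖∑ k ∈ Finset.range m, (t^k * ((k.factorial : ℝ))⁻¹) • ((-B)^k * E)‖ := by
        rw [hsplit, smul_mul_assoc, key t, norm_smul, hnorm]
    _ ≤ Real.exp (-(t * μ.re)) * ((1+t)^m * ∑ k ∈ Finset.range m, ‖(-B)^k * E‖) :=
        mul_le_mul_of_nonneg_left hsum (Real.exp_pos _).le
    _ = (∑ k ∈ Finset.range m, ‖(-B)^k * E‖) * (1+t)^m * Real.exp (-(t * μ.re)) := by ring

end AuxLemmas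

set_option maxHeartbeats 1600000 in
/-- Equivariance of the constant term limit: under the differential system
`D_XΦ = Γ(X)Φ + Ψ_X`, `D_YΦ = Γ(Y)Φ + Ψ_Y` with suitable decay of the inhomogeneous terms,
the limits `v₀ = lim_{t→∞} e^{−tΓ(Y)} E Φ(a + tY)` and
`v₁ = lim_{t→∞} e^{−tΓ(Y)} E Φ(a + X + tY)` exist and satisfy `v₁ = e^{Γ(X)} v₀`. -/
theorem constant_term_limit_equivariance
    (U : Type*) [NormedAddCommGroup U] [NormedSpace ℂ U] [FiniteDimensional ℂ U]
    (d : ℕ) (hd : 1 ≤ d)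
    (Γ : EuclideanSpace ℝ (Fin d) →ₗ[ℝ] (U →L[ℂ] U))
    (hcomm : ∀ X Y : EuclideanSpace ℝ (Fin d), Commute (Γ X) (Γ Y))
    (lam : EuclideanSpace ℝ (Fin d) →ₗ[ℝ] ℂ)
    (E : U →L[ℂ] U) (hE : IsIdempotentElem E)
    (hEcomm : ∀ X : EuclideanSpace ℝ (Fin d), Commute E (Γ X))
    (hnil : ∀ X : EuclideanSpace ℝ (Fin d),
      IsNilpotent (E * (Γ X - lam X • (1 : U →L[ℂ] U))))
    (X Y a : EuclideanSpace ℝ (Fin d))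
    (Φ : EuclideanSpace ℝ (Fin d) → U) (hΦ : Differentiable ℝ Φ)
    (ΨX ΨY : EuclideanSpace ℝ (Fin d) → U) (hΨXc : Continuous ΨX) (hΨYc : Continuous ΨY)
    (hodeX : ∀ b : EuclideanSpace ℝ (Fin d),
      deriv (fun s : ℝ => Φ (b + s • X)) 0 = Γ X (Φ b) + ΨX b)
    (hodeY : ∀ b : EuclideanSpace ℝ (Fin d),
      deriv (fun s : ℝ => Φ (b + s • Y)) 0 = Γ Y (Φ b) + ΨY b)
    (C ε : ℝ) (hC : 0 < C) (hε : 0 < ε) (N : ℕ)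
    (hbound : ∀ s ∈ Set.Icc (0:ℝ) 1, ∀ t ≥ (0:ℝ),
      ‖ΨX (a + s • X + t • Y)‖
        ≤ C * (1 + t) ^ N * Real.exp ((lam (s • X + t • Y)).re) * Real.exp (-ε * t) ∧
      ‖ΨY (a + s • X + t • Y)‖
        ≤ C * (1 + t) ^ N * Real.exp ((lam (s • X + t • Y)).re) * Real.exp (-ε * t)) :
    ∃ v₀ v₁ : U,
      Tendsto (fun t : ℝ =>
          (NormedSpace.exp ((-t : ℂ) • Γ Y)) (E (Φ (a + t • Y)))) atTop (nhds v₀) ∧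
      Tendsto (fun t : ℝ =>
          (NormedSpace.exp ((-t : ℂ) • Γ Y)) (E (Φ (a + X + t • Y)))) atTop (nhds v₁) ∧
      v₁ = (NormedSpace.exp (Γ X)) v₀ := by
  open NormedSpace in
  -- conversion between the two exponentials
  have hconv : ∀ (t : ℝ) (A : U →L[ℂ] U), ((-t : ℂ) • A) = t • (-A) := by
    intro t A
    have h1 : ((-t : ℂ)) • A = ((-t : ℝ)) • A := by
      rw [← algebraMap_smul ℂ (-t : ℝ) A]; norm_num
    rw [h1, neg_smul, ← smul_neg]
  have hTeq : ∀ (t : ℝ) (A : U →L[ℂ] U), NormedSpace.exp ((-t : ℂ) • A) = exp (t • (-A)) := by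
    intro t A
    rw [hconv]
  -- basic derivative lemmas
  have hline : ∀ (Z c : EuclideanSpace ℝ (Fin d)) (s₀ : ℝ),
      HasDerivAt (fun s : ℝ => c + s • Z) Z s₀ := by
    intro Z c s₀
    simpa using ((hasDerivAt_id s₀).smul_const Z).const_add c
  have hDer : ∀ (Z c : EuclideanSpace ℝ (Fin d)) (s₀ : ℝ),
      HasDerivAt (fun s : ℝ => Φ (c + s • Z)) (fderiv ℝ Φ (c + s₀ • Z) Z) s₀ :=
    fun Z c s₀ => ((hΦ (c + s₀ • Z)).hasFDerivAt).comp_hasDerivAt s₀ (hline Z c s₀)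
  have hfdX : ∀ b, fderiv ℝ Φ b X = Γ X (Φ b) + ΨX b := by
    intro b
    have h1 := hDer X b 0
    have h2 : b + (0:ℝ) • X = b := by simp
    rw [h2] at h1
    rw [← hodeX b, h1.deriv]
  have hfdY : ∀ b, fderiv ℝ Φ b Y = Γ Y (Φ b) + ΨY b := by
    intro b
    have h1 := hDer Y b 0
    have h2 : b + (0:ℝ) • Y = b := by simp
    rw [h2] at h1
    rw [← hodeY b, h1.deriv]
  -- the main derivative computation
  have hmain : ∀ (Z : EuclideanSpace ℝ (Fin d)) (Ψ : EuclideanSpace ℝ (Fin d) → U),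
      (∀ b, fderiv ℝ Φ b Z = Γ Z (Φ b) + Ψ b) →
      ∀ (c : EuclideanSpace ℝ (Fin d)) (t₀ : ℝ),
      HasDerivAt (fun t : ℝ => (exp (t • (-Γ Z))) (E (Φ (c + t • Z))))
        ((exp (t₀ • (-Γ Z))) (E (Ψ (c + t₀ • Z)))) t₀ := by
    intro Z Ψ hfd c t₀
    have hT : HasDerivAt (fun t : ℝ => exp (t • (-Γ Z)))
        (exp (t₀ • (-Γ Z)) * (-Γ Z)) t₀ := hasDerivAt_exp_smul_const (-Γ Z) t₀
    have hTr : HasDerivAt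
        (fun t : ℝ => (ContinuousLinearMap.restrictScalarsL ℂ U U ℝ ℝ) (exp (t • (-Γ Z))))
        ((ContinuousLinearMap.restrictScalarsL ℂ U U ℝ ℝ) (exp (t₀ • (-Γ Z)) * (-Γ Z))) t₀ :=
      (ContinuousLinearMap.restrictScalarsL ℂ U U ℝ ℝ).hasFDerivAt.comp_hasDerivAt t₀ hT
    have hu : HasDerivAt (fun t : ℝ => E (Φ (c + t • Z)))
        (E (Γ Z (Φ (c + t₀ • Z)) + Ψ (c + t₀ • Z))) t₀ := by
      have h1 := hDer Z c t₀
      rw [hfd] at h1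
      exact (E.restrictScalars ℝ).hasFDerivAt.comp_hasDerivAt t₀ h1
    have h2 := hTr.clm_apply hu
    have hcm : E (Γ Z (Φ (c + t₀ • Z))) = Γ Z (E (Φ (c + t₀ • Z))) := by
      rw [← ContinuousLinearMap.mul_apply, (hEcomm Z).eq, ContinuousLinearMap.mul_apply]
    convert h2 using 1; rfl
    simp only [ContinuousLinearMap.coe_restrict_scalarsL',
      ContinuousLinearMap.coe_restrictScalars', map_add, ContinuousLinearMap.mul_apply,
      ContinuousLinearMap.neg_apply, map_neg, hcm]
    abel
  -- decay of e^{-tΓY} E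
  obtain ⟨n, K, hK, hKb⟩ := aux_exp_nilpotent (Γ Y) E (lam Y) (hEcomm Y) hE (hnil Y)
  -- bound for e^{-sΓX} on [0,1]
  obtain ⟨M₁, hM₁⟩ := (isCompact_Icc (a := (0:ℝ)) (b := 1)).exists_bound_of_continuousOn
    (Continuous.continuousOn
      ((by letI : NormedAlgebra ℚ (U →L[ℂ] U) := .restrictScalars ℚ ℂ _; exact exp_continuous (𝔸 := U →L[ℂ] U) : Continuous (NormedSpace.exp : (U →L[ℂ] U) → (U →L[ℂ] U))).comp ((continuous_id (X := ℝ)).smul (continuous_const (y := -Γ X)))))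
  have hM₁0 : 0 ≤ M₁ := le_trans (norm_nonneg _) (hM₁ 0 (by norm_num))
  -- real part computation
  have hre : ∀ s t : ℝ, (lam (s • X + t • Y)).re = s * (lam X).re + t * (lam Y).re := by
    intro s t
    rw [map_add, LinearMap.map_smul, LinearMap.map_smul]
    simp [Complex.real_smul]
  -- the function g and its derivative f
  have hg : ∀ t : ℝ, HasDerivAt (fun t : ℝ => (exp (t • (-Γ Y))) (E (Φ (a + t • Y))))
      ((exp (t • (-Γ Y))) (E (ΨY (a + t • Y)))) t := fun t => hmain Y ΨY hfdY a t
  -- norm bound for f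
  have hfnorm : ∀ t : ℝ, 0 ≤ t → ‖(exp (t • (-Γ Y))) (E (ΨY (a + t • Y)))‖
      ≤ (K*C) * ((1+t)^(n+N) * Real.exp (-ε*t)) := by
    intro t ht
    have hb := (hbound 0 (by norm_num) t ht).2
    have e1 : a + (0:ℝ) • X + t • Y = a + t • Y := by
      rw [zero_smul, add_zero]
    rw [e1, hre 0 t, zero_mul, zero_add] at hb
    calc ‖(exp (t • (-Γ Y))) (E (ΨY (a + t • Y)))‖
        = ‖(exp (t • (-Γ Y)) * E) (ΨY (a + t • Y))‖ := by
          rw [ContinuousLinearMap.mul_apply]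
      _ ≤ ‖exp (t • (-Γ Y)) * E‖ * ‖ΨY (a + t • Y)‖ := ContinuousLinearMap.le_opNorm _ _
      _ ≤ (K*(1+t)^n * Real.exp (-(t*(lam Y).re)))
            * (C * (1 + t) ^ N * Real.exp (t * (lam Y).re) * Real.exp (-ε * t)) :=
          mul_le_mul (hKb t ht) hb (norm_nonneg _) (by positivity)
      _ = (K*C) * ((1+t)^(n+N) * Real.exp (-ε*t))
            * (Real.exp (-(t*(lam Y).re)) * Real.exp (t*(lam Y).re)) := by
          rw [pow_add]; ring
      _ = (K*C) * ((1+t)^(n+N) * Real.exp (-ε*t)) := by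
          rw [← Real.exp_add, neg_add_cancel, Real.exp_zero, mul_one]
  -- continuity of f
  have hTc : Continuous (fun t : ℝ => exp (t • (-Γ Y))) :=
    (by letI : NormedAlgebra ℚ (U →L[ℂ] U) := .restrictScalars ℚ ℂ _; exact exp_continuous (𝔸 := U →L[ℂ] U) : Continuous (NormedSpace.exp : (U →L[ℂ] U) → (U →L[ℂ] U))).comp ((continuous_id (X := ℝ)).smul continuous_const)
  have hfc : Continuous (fun t : ℝ => (exp (t • (-Γ Y))) (E (ΨY (a + t • Y)))) := by
    have h2 : Continuous fun t : ℝ => E (ΨY (a + t • Y)) :=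
      E.continuous.comp (hΨYc.comp (continuous_const.add
        ((continuous_id (X := ℝ)).smul continuous_const)))
    exact (isBoundedBilinearMap_apply (𝕜 := ℂ)).continuous.comp (hTc.prodMk h2)
  -- integrability of f
  obtain ⟨c₁, hc₁, hc₁b⟩ := aux_poly_exp (n+N) hε
  have hfint : MeasureTheory.IntegrableOn
      (fun t : ℝ => (exp (t • (-Γ Y))) (E (ΨY (a + t • Y)))) (Set.Ioi (0:ℝ)) := by
    apply MeasureTheory.Integrable.mono'
      ((exp_neg_integrableOn_Ioi 0 (half_pos hε)).const_mul (K*C*c₁))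
      hfc.aestronglyMeasurable
    apply (MeasureTheory.ae_restrict_iff' measurableSet_Ioi).2 (MeasureTheory.ae_of_all _ ?_)
    intro t ht
    have ht' : (0:ℝ) ≤ t := le_of_lt ht
    calc ‖(exp (t • (-Γ Y))) (E (ΨY (a + t • Y)))‖
        ≤ (K*C) * ((1+t)^(n+N) * Real.exp (-ε*t)) := hfnorm t ht'
      _ ≤ (K*C) * (c₁ * Real.exp (-(ε/2)*t)) := by
          apply mul_le_mul_of_nonneg_left (hc₁b t ht') (by positivity)
      _ = K*C*c₁ * Real.exp (-(ε/2) * t) := by ring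
  -- FTC and convergence of g
  have hI : ∀ t : ℝ, (∫ u in (0:ℝ)..t, (exp (u • (-Γ Y))) (E (ΨY (a + u • Y))))
      = (exp (t • (-Γ Y))) (E (Φ (a + t • Y))) - (exp ((0:ℝ) • (-Γ Y))) (E (Φ (a + (0:ℝ) • Y))) :=
    fun t => intervalIntegral.integral_eq_sub_of_hasDerivAt
      (fun u _ => hg u) (hfc.intervalIntegrable 0 t)
  set v₀ : U := (exp ((0:ℝ) • (-Γ Y))) (E (Φ (a + (0:ℝ) • Y)))
      + ∫ u in Set.Ioi (0:ℝ), (exp (u • (-Γ Y))) (E (ΨY (a + u • Y))) with hv₀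
  have hgt : Tendsto (fun t : ℝ => (exp (t • (-Γ Y))) (E (Φ (a + t • Y)))) atTop (𝓝 v₀) := by
    have h3 := MeasureTheory.intervalIntegral_tendsto_integral_Ioi 0 hfint tendsto_id
    have h4 := h3.const_add ((exp ((0:ℝ) • (-Γ Y))) (E (Φ (a + (0:ℝ) • Y))))
    refine h4.congr (fun t => ?_)
    simp only [id_eq]
    rw [hI t]
    abel
  -- first limit
  have hlim1 : Tendsto (fun t : ℝ => (exp ((-t : ℂ) • Γ Y)) (E (Φ (a + t • Y)))) atTop (𝓝 v₀) := by
    have heqf : (fun t : ℝ => (exp ((-t : ℂ) • Γ Y)) (E (Φ (a + t • Y))))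
        = fun t : ℝ => (exp (t • (-Γ Y))) (E (Φ (a + t • Y))) := by
      funext t; rw [hTeq]
    rw [heqf]; exact hgt
  -- derivative in s
  have hFs : ∀ (t s₀ : ℝ), HasDerivAt
      (fun s : ℝ => (exp (s • (-Γ X))) (E (Φ (a + s • X + t • Y))))
      ((exp (s₀ • (-Γ X))) (E (ΨX (a + s₀ • X + t • Y)))) s₀ := by
    intro t s₀
    have h1 := hmain X ΨX hfdX (a + t • Y) s₀
    have he : ∀ s : ℝ, a + t • Y + s • X = a + s • X + t • Y := fun s => by abel
    simp only [he] at h1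
    exact h1
  have hFder : ∀ (t s₀ : ℝ), HasDerivAt
      (fun s : ℝ => (exp (t • (-Γ Y))) ((exp (s • (-Γ X))) (E (Φ (a + s • X + t • Y)))))
      ((exp (t • (-Γ Y))) ((exp (s₀ • (-Γ X))) (E (ΨX (a + s₀ • X + t • Y))))) s₀ :=
    fun t s₀ =>
      ((exp (t • (-Γ Y))).restrictScalars ℝ).hasFDerivAt.comp_hasDerivAt s₀ (hFs t s₀)
  -- commutation of E with exp(s•(-ΓX))
  have hcomEs : ∀ s : ℝ, Commute E (exp (s • (-Γ X))) :=
    fun s => ((((hEcomm X).neg_right).smul_right s).exp_right)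
  have hw : ∀ (s : ℝ) (v : U), E ((exp (s • (-Γ X))) (E v)) = (exp (s • (-Γ X))) (E v) := by
    intro s v
    rw [← ContinuousLinearMap.mul_apply E, (hcomEs s).eq, ContinuousLinearMap.mul_apply,
      ← ContinuousLinearMap.mul_apply E E, hE.eq]
  -- bound on the s-derivative
  have habs : ∀ s : ℝ, s ∈ Set.Icc (0:ℝ) 1 →
      Real.exp (s * (lam X).re) ≤ Real.exp |(lam X).re| := by
    intro s hs
    apply Real.exp_le_exp.2
    calc s * (lam X).re ≤ s * |(lam X).re| :=
          mul_le_mul_of_nonneg_left (le_abs_self _) hs.1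
    _ ≤ 1 * |(lam X).re| := mul_le_mul_of_nonneg_right hs.2 (abs_nonneg _)
    _ = |(lam X).re| := one_mul _
  set D : ℝ := K * M₁ * ‖E‖ * C * Real.exp |(lam X).re| with hD
  have hD0 : 0 ≤ D := by positivity
  have hFbound : ∀ t : ℝ, 0 ≤ t → ∀ s ∈ Set.Icc (0:ℝ) 1,
      ‖(exp (t • (-Γ Y))) ((exp (s • (-Γ X))) (E (ΨX (a + s • X + t • Y))))‖
        ≤ D * ((1+t)^(n+N) * Real.exp (-ε*t)) := by
    intro t ht s hs
    have hb := (hbound s hs t ht).1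
    rw [hre s t] at hb
    have h0 : (exp (t • (-Γ Y))) ((exp (s • (-Γ X))) (E (ΨX (a + s • X + t • Y))))
        = (exp (t • (-Γ Y)) * E) ((exp (s • (-Γ X))) (E (ΨX (a + s • X + t • Y)))) := by
      rw [ContinuousLinearMap.mul_apply, hw]
    rw [h0]
    calc ‖(exp (t • (-Γ Y)) * E) ((exp (s • (-Γ X))) (E (ΨX (a + s • X + t • Y))))‖
        ≤ ‖exp (t • (-Γ Y)) * E‖ * ‖(exp (s • (-Γ X))) (E (ΨX (a + s • X + t • Y)))‖ :=
          ContinuousLinearMap.le_opNorm _ _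
      _ ≤ ‖exp (t • (-Γ Y)) * E‖
            * (‖exp (s • (-Γ X))‖ * (‖E‖ * ‖ΨX (a + s • X + t • Y)‖)) := by
          apply mul_le_mul_of_nonneg_left _ (norm_nonneg _)
          calc ‖(exp (s • (-Γ X))) (E (ΨX (a + s • X + t • Y)))‖
              ≤ ‖exp (s • (-Γ X))‖ * ‖E (ΨX (a + s • X + t • Y))‖ :=
                ContinuousLinearMap.le_opNorm _ _
            _ ≤ ‖exp (s • (-Γ X))‖ * (‖E‖ * ‖ΨX (a + s • X + t • Y)‖) :=
                mul_le_mul_of_nonneg_left (E.le_opNorm _) (norm_nonneg _)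
      _ ≤ (K*(1+t)^n*Real.exp (-(t*(lam Y).re)))
            * (M₁ * (‖E‖ * (C * (1 + t) ^ N
              * Real.exp (s*(lam X).re + t*(lam Y).re) * Real.exp (-ε * t)))) := by
          apply mul_le_mul (hKb t ht) _ (by positivity) (by positivity)
          exact mul_le_mul (hM₁ s hs)
            (mul_le_mul_of_nonneg_left hb (norm_nonneg _)) (by positivity) hM₁0
      _ = (K*M₁*‖E‖*C) * Real.exp (s*(lam X).re) * ((1+t)^(n+N) * Real.exp (-ε*t))
            * (Real.exp (-(t*(lam Y).re)) * Real.exp (t*(lam Y).re)) := by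
          rw [Real.exp_add, pow_add]; ring
      _ = (K*M₁*‖E‖*C) * Real.exp (s*(lam X).re) * ((1+t)^(n+N) * Real.exp (-ε*t)) := by
          rw [← Real.exp_add, neg_add_cancel, Real.exp_zero, mul_one]
      _ ≤ (K*M₁*‖E‖*C) * Real.exp |(lam X).re| * ((1+t)^(n+N) * Real.exp (-ε*t)) := by
          apply mul_le_mul_of_nonneg_right
            (mul_le_mul_of_nonneg_left (habs s hs) (by positivity)) (by positivity)
      _ = D * ((1+t)^(n+N) * Real.exp (-ε*t)) := by rw [hD]
  -- mean value inequality
  have hdiff : ∀ t : ℝ, 0 ≤ t →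
      ‖(exp (t • (-Γ Y))) ((exp ((1:ℝ) • (-Γ X))) (E (Φ (a + (1:ℝ) • X + t • Y))))
        - (exp (t • (-Γ Y))) ((exp ((0:ℝ) • (-Γ X))) (E (Φ (a + (0:ℝ) • X + t • Y))))‖
        ≤ D * ((1+t)^(n+N) * Real.exp (-ε*t)) := by
    intro t ht
    have h5 := norm_image_sub_le_of_norm_deriv_le_segment'
      (f := fun s : ℝ => (exp (t • (-Γ Y))) ((exp (s • (-Γ X))) (E (Φ (a + s • X + t • Y)))))
      (f' := fun s : ℝ => (exp (t • (-Γ Y))) ((exp (s • (-Γ X))) (E (ΨX (a + s • X + t • Y)))))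
      (a := 0) (b := 1) (C := D * ((1+t)^(n+N) * Real.exp (-ε*t)))
      (fun s _ => (hFder t s).hasDerivWithinAt)
      (fun s hs => hFbound t ht s (Set.mem_Icc_of_Ico hs)) 1 (Set.right_mem_Icc.2 zero_le_one)
    simpa using h5
  -- identify F t 0 with g t
  have hF0 : ∀ t : ℝ,
      (exp (t • (-Γ Y))) ((exp ((0:ℝ) • (-Γ X))) (E (Φ (a + (0:ℝ) • X + t • Y))))
      = (exp (t • (-Γ Y))) (E (Φ (a + t • Y))) := by
    intro t
    simp [zero_smul, NormedSpace.exp_zero, ContinuousLinearMap.one_apply, add_zero]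
  -- the comparison function tends to zero
  have hβ : Tendsto (fun t : ℝ => D * (c₁ * Real.exp (-(ε/2) * t))) atTop (𝓝 0) := by
    have h6 : Tendsto (fun t : ℝ => Real.exp (-(ε/2) * t)) atTop (𝓝 0) := by
      have h7 : Tendsto (fun t : ℝ => (ε/2) * t) atTop atTop :=
        Tendsto.const_mul_atTop (half_pos hε) tendsto_id
      have h8 := Real.tendsto_exp_neg_atTop_nhds_zero.comp h7
      refine h8.congr (fun t => ?_)
      simp [Function.comp, neg_mul]
    have h9 := h6.const_mul (D * c₁)
    rw [mul_zero] at h9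
    refine h9.congr fun t => by ring
  have hzero : Tendsto (fun t : ℝ =>
      (exp (t • (-Γ Y))) ((exp ((1:ℝ) • (-Γ X))) (E (Φ (a + (1:ℝ) • X + t • Y))))
      - (exp (t • (-Γ Y))) (E (Φ (a + t • Y)))) atTop (𝓝 0) := by
    apply squeeze_zero_norm' ?_ hβ
    filter_upwards [eventually_ge_atTop (0:ℝ)] with t ht
    rw [← hF0 t]
    calc ‖(exp (t • (-Γ Y))) ((exp ((1:ℝ) • (-Γ X))) (E (Φ (a + (1:ℝ) • X + t • Y))))
        - (exp (t • (-Γ Y))) ((exp ((0:ℝ) • (-Γ X))) (E (Φ (a + (0:ℝ) • X + t • Y))))‖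
        ≤ D * ((1+t)^(n+N) * Real.exp (-ε*t)) := hdiff t ht
      _ ≤ D * (c₁ * Real.exp (-(ε/2) * t)) :=
          mul_le_mul_of_nonneg_left (hc₁b t ht) hD0
  have hlimB : Tendsto (fun t : ℝ =>
      (exp (t • (-Γ Y))) ((exp ((1:ℝ) • (-Γ X))) (E (Φ (a + (1:ℝ) • X + t • Y)))))
      atTop (𝓝 v₀) := by
    have h10 := hgt.add hzero
    rw [add_zero] at h10
    refine h10.congr fun t => ?_
    abel
  -- second limit
  have hXinv : exp (Γ X) * exp ((1:ℝ) • (-Γ X)) = 1 := by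
    letI : NormedAlgebra ℚ (U →L[ℂ] U) := .restrictScalars ℚ ℂ _
    rw [one_smul, ← NormedSpace.exp_add_of_commute (Commute.neg_right (Commute.refl (Γ X))),
      add_neg_cancel, NormedSpace.exp_zero]
  have hcommTX : ∀ t : ℝ, Commute (exp (Γ X)) (exp (t • (-Γ Y))) :=
    fun t => (((hcomm X Y).neg_right).smul_right t).exp
  have hkey2 : ∀ (t : ℝ) (v : U),
      (exp (Γ X)) ((exp (t • (-Γ Y))) ((exp ((1:ℝ) • (-Γ X))) v))
      = (exp (t • (-Γ Y))) v := by
    intro t v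
    rw [← ContinuousLinearMap.mul_apply, ← ContinuousLinearMap.mul_apply,
      (hcommTX t).eq, mul_assoc, hXinv, mul_one]
  have hlim2 : Tendsto (fun t : ℝ => (exp ((-t : ℂ) • Γ Y)) (E (Φ (a + X + t • Y)))) atTop
      (𝓝 ((exp (Γ X)) v₀)) := by
    have h11 : Tendsto (fun t : ℝ => (exp (Γ X))
        ((exp (t • (-Γ Y))) ((exp ((1:ℝ) • (-Γ X))) (E (Φ (a + (1:ℝ) • X + t • Y))))))
        atTop (𝓝 ((exp (Γ X)) v₀)) :=
      ((exp (Γ X)).continuous.tendsto v₀).comp hlimB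
    refine h11.congr fun t => ?_
    rw [hkey2, one_smul, hTeq t (Γ Y)]
  exact ⟨v₀, (exp (Γ X)) v₀, hlim1, hlim2, rfl⟩
end

section
/- Let k be a commutative ring, 𝔤 a Lie algebra over k, and 𝔟, 𝔥 ⊆ 𝔤 Lie subalgebras such that 𝔤 = 𝔟 + 𝔥 as k-modules. Let ι : 𝔤 → U(𝔤) be the canonical map, let B be the subalgebra of U(𝔤) generated by ι(𝔟), and let J = U(𝔤)·ι(𝔥) be the left ideal of U(𝔤) generated by ι(𝔥). Then U(𝔤) = B + J, i.e., every element of U(𝔤) is the sum of an element of B and an element of J. -/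
attribute [local instance 100] LieRing.ofAssociativeRing

/-- The universal enveloping algebra is generated, as an algebra, by the image of `ι`. -/
theorem uea_adjoin_range_ι_eq_top (k : Type*) [CommRing k] (g : Type*) [LieRing g]
    [LieAlgebra k g] :
    Algebra.adjoin k (Set.range (⇑(UniversalEnvelopingAlgebra.ι k) : g →
      UniversalEnvelopingAlgebra k g)) = ⊤ := by
  let φ : FreeAlgebra k g →ₐ[k] UniversalEnvelopingAlgebra k g :=
    (UniversalEnvelopingAlgebra.mkAlgHom k g).comp (RingCon.mkₐ k (TensorAlgebra.ringCon k g))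
  have hφ : Function.Surjective φ :=
    (RingCon.mkₐ_surjective (α := k) _).comp (RingCon.mkₐ_surjective (α := k) _)
  have hrange : Set.range (⇑(UniversalEnvelopingAlgebra.ι k) : g →
      UniversalEnvelopingAlgebra k g) = φ '' Set.range (FreeAlgebra.ι k) := by
    rw [← Set.range_comp]
    refine congrArg _ (funext fun x => ?_)
    show UniversalEnvelopingAlgebra.ι k x = φ (FreeAlgebra.ι k x)
    show UniversalEnvelopingAlgebra.ι k x =
      UniversalEnvelopingAlgebra.mkAlgHom k g (RingCon.mkₐ k (TensorAlgebra.ringCon k g) (FreeAlgebra.ι k x))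
    rw [TensorAlgebra.ringQuot_mkAlgHom_freeAlgebra_ι_eq_ι,
      UniversalEnvelopingAlgebra.ι_apply]
  rw [hrange, ← AlgHom.map_adjoin, FreeAlgebra.adjoin_range_ι, Algebra.map_top,
    AlgHom.range_eq_top]
  exact hφ

/-- Poincaré–Birkhoff–Witt style decomposition: if `𝔤 = 𝔟 + 𝔥` as `k`-modules for Lie
subalgebras `𝔟, 𝔥 ⊆ 𝔤`, `B` is the subalgebra of `U(𝔤)` generated by `ι(𝔟)` and
`J = U(𝔤)·ι(𝔥)` is the left ideal generated by `ι(𝔥)`, then `U(𝔤) = B + J`. -/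
theorem enveloping_algebra_eq_subalgebra_add_left_ideal
    (k : Type*) [CommRing k] (g : Type*) [LieRing g] [LieAlgebra k g]
    (b h : LieSubalgebra k g)
    (hsum : (b : Submodule k g) ⊔ (h : Submodule k g) = ⊤) :
    let ι : g → UniversalEnvelopingAlgebra k g := ⇑(UniversalEnvelopingAlgebra.ι k)
    let B : Subalgebra k (UniversalEnvelopingAlgebra k g) := Algebra.adjoin k (ι '' (b : Set g))
    let J : Ideal (UniversalEnvelopingAlgebra k g) := Ideal.span (ι '' (h : Set g))
    ∀ u : UniversalEnvelopingAlgebra k g, ∃ x ∈ B, ∃ y ∈ J, u = x + y := by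
  intro ι B J
  let U := UniversalEnvelopingAlgebra k g
  let G : Submodule k U := Submodule.span k (Set.range ι)
  let M : Submodule k U := Subalgebra.toSubmodule B ⊔ J.restrictScalars k
  have hιB : ∀ x ∈ b, ι x ∈ B := fun x hx => Algebra.subset_adjoin ⟨x, hx, rfl⟩
  have hιJ : ∀ x ∈ h, ι x ∈ J := fun x hx => Ideal.subset_span ⟨x, hx, rfl⟩
  -- the basic commutation relation
  have hbr : ∀ x y : g, ι x * ι y - ι y * ι x = ι ⁅x, y⁆ := by
    intro x y
    have := (UniversalEnvelopingAlgebra.ι k).map_lie (x := x) (y := y)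
    rw [Ring.lie_def] at this
    exact this.symm
  -- commutators with elements of `G ^ n` remain in `G ^ n`
  have hcomm : ∀ n : ℕ, ∀ y : g, ∀ m ∈ G ^ n, ι y * m - m * ι y ∈ G ^ n := by
    intro n
    induction n with
    | zero =>
      intro y m hm
      rw [pow_zero] at hm ⊢
      rw [Submodule.mem_one] at hm
      obtain ⟨c, rfl⟩ := hm
      have : ι y * algebraMap k U c - algebraMap k U c * ι y = 0 := by
        rw [Algebra.commutes]; abel
      rw [this]
      exact zero_mem _
    | succ n ih =>
      intro y m hm
      rw [pow_succ] at hm ⊢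
      refine Submodule.mul_induction_on hm ?_ ?_
      · intro a ha c hc
        have key : ι y * (a * c) - a * c * ι y =
            (ι y * a - a * ι y) * c + a * (ι y * c - c * ι y) := by
            simp only [mul_sub, sub_mul, mul_assoc]; abel
        rw [key]
        refine add_mem (Submodule.mul_mem_mul (ih y a ha) hc) ?_
        refine Submodule.mul_mem_mul ha ?_
        refine Submodule.span_induction ?_ ?_ ?_ ?_ hc
        · rintro _ ⟨x, rfl⟩
          rw [hbr]
          exact Submodule.subset_span ⟨_, rfl⟩
        · simp
        · intro u v _ _ hu hv
          have : ι y * (u + v) - (u + v) * ι y =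
              (ι y * u - u * ι y) + (ι y * v - v * ι y) := by noncomm_ring
          rw [this]; exact add_mem hu hv
        · intro r u _ hu
          have : ι y * r • u - r • u * ι y = r • (ι y * u - u * ι y) := by
            rw [smul_sub, mul_smul_comm, smul_mul_assoc]
          rw [this]; exact Submodule.smul_mem _ _ hu
      · intro u v hu hv
        have : ι y * (u + v) - (u + v) * ι y =
            (ι y * u - u * ι y) + (ι y * v - v * ι y) := by noncomm_ring
        rw [this]; exact add_mem hu hv
  -- the main induction: every `G ^ n` is contained in `M`
  have hmain : ∀ n : ℕ, G ^ n ≤ M := by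
    intro n
    induction n with
    | zero =>
      rw [pow_zero]
      intro m hm
      rw [Submodule.mem_one] at hm
      obtain ⟨c, rfl⟩ := hm
      exact Submodule.mem_sup_left (B.algebraMap_mem c)
    | succ n ih =>
      rw [pow_succ]
      intro m hm
      refine Submodule.mul_induction_on hm ?_ (fun u v hu hv => add_mem hu hv)
      intro a ha c hc
      refine Submodule.span_induction (p := fun c _ => a * c ∈ M) ?_ ?_ ?_ ?_ hc
      · rintro _ ⟨x, rfl⟩
        have hx : x ∈ (b : Submodule k g) ⊔ (h : Submodule k g) := by
          rw [hsum]; trivial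
        obtain ⟨xb, hxb, xh, hxh, rfl⟩ := Submodule.mem_sup.mp hx
        have hsplit : ι (xb + xh) = ι xb + ι xh :=
          (UniversalEnvelopingAlgebra.ι k).map_add xb xh
        rw [hsplit, mul_add]
        refine add_mem ?_ (Submodule.mem_sup_right ?_)
        · have h3 : a * ι xb = ι xb * a - (ι xb * a - a * ι xb) := by noncomm_ring
          rw [h3]
          refine sub_mem ?_ (ih (hcomm n xb a ha))
          obtain ⟨p, hp, q, hq, rfl⟩ := Submodule.mem_sup.mp (ih ha)
          rw [mul_add]
          refine add_mem (Submodule.mem_sup_left ?_) (Submodule.mem_sup_right ?_)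
          · exact (Subalgebra.mem_toSubmodule _).mpr
              (mul_mem (hιB xb hxb) ((Subalgebra.mem_toSubmodule _).mp hp))
          · exact J.mul_mem_left _ hq
        · exact J.mul_mem_left a (hιJ xh hxh)
      · show a * 0 ∈ M
        rw [mul_zero]; exact zero_mem _
      · intro u v _ _ hu hv
        show a * (u + v) ∈ M
        rw [mul_add]; exact add_mem hu hv
      · intro r u _ hu
        show a * r • u ∈ M
        rw [mul_smul_comm]; exact Submodule.smul_mem _ r hu
  -- every element lies in `M`
  intro u
  have htop : Algebra.adjoin k (Set.range ι) = ⊤ := uea_adjoin_range_ι_eq_top k g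
  have hu : u ∈ Submodule.span k ((Submonoid.closure (Set.range ι) : Submonoid U) : Set U) := by
    have hmem : u ∈ Subalgebra.toSubmodule (Algebra.adjoin k (Set.range ι)) := by
      rw [htop]; trivial
    rwa [Algebra.adjoin_eq_span] at hmem
  have hM : u ∈ M := by
    refine Submodule.span_le.mpr ?_ hu
    intro z hz
    have : ∃ n : ℕ, z ∈ G ^ n := by
      refine Submonoid.closure_induction ?_ ?_ ?_ hz
      · intro x hx
        exact ⟨1, by rw [pow_one]; exact Submodule.subset_span hx⟩
      · exact ⟨0, by rw [pow_zero]; exact Submodule.mem_one.mpr ⟨1, map_one _⟩⟩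
      · rintro x y _ _ ⟨m, hm⟩ ⟨n, hn⟩
        exact ⟨m + n, by rw [pow_add]; exact Submodule.mul_mem_mul hm hn⟩
    obtain ⟨n, hn⟩ := this
    exact hmain n hn
  obtain ⟨p, hp, q, hq, rfl⟩ := Submodule.mem_sup.mp hM
  exact ⟨p, (Subalgebra.mem_toSubmodule _).mp hp, q, hq, rfl⟩
end
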